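/- A module M has finite Krull-Schmidt length (i.e., there is a finite bound on the cardinality of direct sum decompositions of M into nonzero summands) if and only if there exists n ≥ 1 such that every strictly descending chain of direct summands of M has length at most n. -/

import Mathlib

/-- `N` is a direct summand of the module `M`. -/
def IsSummand {R : Type*} [Ring R] {M : Type*} [AddCommGroup M] [Module R M]
    (N : Submodule R M) : Prop :=
  ∃ N', IsCompl N N'

/-- `s` is a direct sum decomposition of `M` into nonzero summands: an independent set of
nonzero submodules whose (direct) sum is all of `M`. -/
def IsDecomp {R : Type*} [Ring R] {M : Type*} [AddCommGroup M] [Module R M]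
    (s : Set (Submodule R M)) : Prop :=
  sSupIndep s ∧ sSup s = ⊤ ∧ ⊥ ∉ s


section Aux
variable {R : Type*} [Ring R] {M : Type*} [AddCommGroup M] [Module R M]

open Set in
private lemma aux_disjoint {s : Set (Submodule R M)} (hs : sSupIndep s) {t : Set (Submodule R M)}
    (htf : t.Finite) (hts0 : t ⊆ s) : Disjoint (sSup t) (sSup (s \ t)) := by
  refine @Set.Finite.induction_on _
    (fun u _ => u ⊆ s → Disjoint (sSup u) (sSup (s \ u))) t htf (fun _ => by simp) ?_ hts0
  intro a t ha hf ih hts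
  have has : a ∈ s := hts (mem_insert a t)
  have hts' : t ⊆ s := fun x hx => hts (mem_insert_of_mem a hx)
  rw [sSup_insert]
  apply Disjoint.disjoint_sup_left_of_disjoint_sup_right
  · exact (ih hts').mono_right (sSup_le_sSup (diff_subset_diff_right (subset_insert a t)))
  · refine (hs has).mono_right (sup_le (sSup_le_sSup ?_) (sSup_le_sSup ?_))
    · intro x hx
      exact ⟨hts' hx, fun h => ha (mem_singleton_iff.1 h ▸ hx)⟩
    · exact diff_subset_diff_right (singleton_subset_iff.2 (mem_insert a t))

open Set in
private lemma aux_backward {m : ℕ} (hm : ¬ ∃ f : Fin (m + 1) → Submodule R M,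
      (∀ i, IsSummand (f i)) ∧ StrictAnti f)
    {s : Set (Submodule R M)} (hs : IsDecomp s) : s.Finite ∧ s.ncard ≤ m := by
  classical
  obtain ⟨hind, hsup, hbot⟩ := hs
  by_contra hcon
  -- extract a finite subset of cardinality m+1
  obtain ⟨t, hts, htf, htc⟩ : ∃ t ⊆ s, t.Finite ∧ t.ncard = m + 1 := by
    rcases s.finite_or_infinite with hfin | hinf
    · have : ¬ s.ncard ≤ m := fun h => hcon ⟨hfin, h⟩
      obtain ⟨t, hts, htc⟩ := Set.exists_subset_card_eq (show m + 1 ≤ s.ncard by omega)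
      exact ⟨t, hts, hfin.subset hts, htc⟩
    · obtain ⟨t, hts, htf, htc⟩ := hinf.exists_subset_ncard_eq (m + 1)
      exact ⟨t, hts, htf, htc⟩
  haveI := htf.fintype
  have hcard : Fintype.card t = m + 1 := by
    rw [← Set.toFinset_card, ← Set.ncard_eq_toFinset_card']; exact htc
  let q := Fintype.equivFinOfCardEq hcard
  let e : Fin (m + 1) → Submodule R M := fun i => (q.symm i : Submodule R M)
  have einj : Function.Injective e := fun i j h => by
    have := Subtype.val_injective h
    simpa using q.symm.injective this
  have hes : ∀ i, e i ∈ s := fun i => hts (q.symm i).2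
  set E : ℕ → Set (Submodule R M) := fun a => e '' {j : Fin (m + 1) | (j : ℕ) < a} with hE
  set F : ℕ → Submodule R M := fun a => sSup (s \ E a) with hF
  have hEs : ∀ a, E a ⊆ s := by rintro a x ⟨j, _, rfl⟩; exact hes j
  have hEfin : ∀ a, (E a).Finite := fun a => (Set.toFinite _).image e
  have hcompl : ∀ a, IsCompl (F a) (sSup (E a)) := by
    intro a
    constructor
    · exact (aux_disjoint hind (hEfin a) (hEs a)).symm
    · rw [codisjoint_iff, ← sSup_union, Set.diff_union_of_subset (hEs a), hsup]
  have hFanti : ∀ {a b : ℕ}, a ≤ b → F b ≤ F a := by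
    intro a b hab
    apply sSup_le_sSup
    apply diff_subset_diff_right
    exact Set.image_mono (fun j hj => lt_of_lt_of_le hj hab)
  have hstrict : ∀ i : Fin (m + 1), F ((i : ℕ) + 1) < F (i : ℕ) := by
    intro i
    have hmemF : e i ≤ F (i : ℕ) := by
      apply le_sSup
      refine ⟨hes i, ?_⟩
      rintro ⟨j, hj, hej⟩
      have : j = i := einj hej
      rw [this] at hj
      simp at hj
    have hdisj : Disjoint (e i) (F ((i : ℕ) + 1)) := by
      refine (hind (hes i)).mono_right (sSup_le_sSup (diff_subset_diff_right ?_))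
      exact singleton_subset_iff.2 ⟨i, by simp, rfl⟩
    refine lt_of_le_of_ne (hFanti (Nat.le_succ _)) (fun heq => ?_)
    have : e i ≤ F ((i : ℕ) + 1) := heq ▸ hmemF
    have : e i = ⊥ := hdisj.eq_bot_of_le this
    exact hbot (this ▸ hes i)
  refine hm ⟨fun i => F (i : ℕ), fun i => ⟨sSup (E (i : ℕ)), hcompl _⟩, ?_⟩
  intro i j hij
  exact lt_of_le_of_lt (hFanti (show (i : ℕ) + 1 ≤ (j : ℕ) from hij)) (hstrict i)

open Set in
private lemma aux_forward {n : ℕ} (f : Fin (n + 2) → Submodule R M)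
    (hsum : ∀ i, IsSummand (f i)) (hanti : StrictAnti f) :
    ∃ s : Set (Submodule R M), IsDecomp s ∧ s.Finite ∧ n + 1 ≤ s.ncard := by
  classical
  set F : ℕ → Submodule R M := fun i => f ⟨min i (n + 1), by omega⟩ with hFdef
  have hF : ∀ i, ∃ C, IsCompl (F i) C := fun i => hsum _
  choose C hC using hF
  have hFle : ∀ {i j : ℕ}, i ≤ j → F j ≤ F i := by
    intro i j h
    exact hanti.antitone (by simp only [Fin.mk_le_mk, Fin.le_def]; omega)
  have hFlt : ∀ {i j : ℕ}, i < j → j ≤ n + 1 → F j < F i := by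
    intro i j h hj
    exact hanti (by simp only [Fin.mk_lt_mk, Fin.lt_def]; omega)
  set D : ℕ → Submodule R M := fun i => C (i + 1) ⊓ F i with hDdef
  set A : ℕ → Submodule R M := fun i => C 0 ⊔ (Finset.range i).sup D with hAdef
  -- telescoping
  have hFD : ∀ i, F i = F (i + 1) ⊔ D i := by
    intro i
    calc F i = (F (i + 1) ⊔ C (i + 1)) ⊓ F i := by
          rw [(hC (i + 1)).sup_eq_top, top_inf_eq]
      _ = F (i + 1) ⊔ (C (i + 1) ⊓ F i) := sup_inf_assoc_of_le _ (hFle (Nat.le_succ i))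
  have hD0 : ∀ i ≤ n, D i ≠ ⊥ := by
    intro i hi h
    have h1 := hFD i
    rw [h, sup_bot_eq] at h1
    exact absurd h1.symm (ne_of_lt (hFlt (Nat.lt_succ_self i) (by omega)))
  have hDdisj : ∀ i, Disjoint (D i) (F (i + 1)) :=
    fun i => (hC (i + 1)).disjoint.symm.mono_left inf_le_left
  have hDleA : ∀ {i j : ℕ}, i < j → D i ≤ A j := by
    intro i j hij
    exact le_trans (Finset.le_sup (Finset.mem_range.2 hij)) le_sup_right
  have hA : ∀ i, IsCompl (F i) (A i) := by
    intro i
    induction i with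
    | zero => simpa [hAdef] using hC 0
    | succ i ih =>
      have hAs : A (i + 1) = A i ⊔ D i := by
        rw [hAdef]
        simp only [Finset.range_add_one, Finset.sup_insert]
        rw [sup_comm (D i) ((Finset.range i).sup D), ← sup_assoc]
      rw [hAs]
      have h1 : IsCompl (F (i + 1) ⊔ D i) (A i) := by rw [← hFD i]; exact ih
      have h2 := (hDdisj i).symm.isCompl_sup_right_of_isCompl_sup_left h1
      rwa [sup_comm (D i) (A i)] at h2
  have hDA : ∀ i, Disjoint (D i) (A i ⊔ F (i + 1)) := by
    intro i
    have h1 : Disjoint (D i ⊔ F (i + 1)) (A i) := by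
      rw [sup_comm, ← hFD i]; exact (hA i).disjoint
    have h2 := (hDdisj i).disjoint_sup_right_of_disjoint_sup_left h1
    rwa [sup_comm (F (i + 1)) (A i)] at h2
  -- distinctness of the pieces
  have hDne : ∀ {i j : ℕ}, i < j → j ≤ n → D i ≠ D j := by
    intro i j hij hj h
    have h1 : D j ≤ F (i + 1) := le_trans inf_le_right (hFle hij)
    rw [← h] at h1
    exact hD0 i (by omega) ((hDdisj i).eq_bot_of_le h1)
  set s : Set (Submodule R M) :=
    (D '' Set.Iio (n + 1) ∪ {C 0, F (n + 1)}) \ {⊥} with hsdef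
  have hmem : ∀ y ∈ s, ((∃ j ≤ n, D j = y) ∨ y = C 0 ∨ y = F (n + 1)) ∧ y ≠ ⊥ := by
    intro y hy
    simp only [hsdef, mem_diff, mem_union, mem_image, mem_Iio, mem_insert_iff,
      mem_singleton_iff] at hy
    obtain ⟨h1, h2⟩ := hy
    refine ⟨?_, h2⟩
    rcases h1 with ⟨j, hj, rfl⟩ | h
    · exact Or.inl ⟨j, by omega, rfl⟩
    · exact Or.inr h
  have hDmem : ∀ i ≤ n, D i ∈ s := by
    intro i hi
    exact ⟨Or.inl ⟨i, mem_Iio.2 (by omega), rfl⟩, by simpa using hD0 i hi⟩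
  -- independence
  have hind : sSupIndep s := by
    intro x hx
    obtain ⟨hx1, hxne⟩ := hmem x hx
    rcases hx1 with ⟨i, hi, rfl⟩ | rfl | rfl
    · refine (hDA i).mono_right (sSup_le ?_)
      rintro y ⟨hys, hyx⟩
      rw [mem_singleton_iff] at hyx
      obtain ⟨hy1, hyne⟩ := hmem y hys
      rcases hy1 with ⟨j, hj, rfl⟩ | rfl | rfl
      · rcases lt_trichotomy j i with h | rfl | h
        · exact le_trans (hDleA h) le_sup_left
        · exact absurd rfl hyx
        · exact le_trans (le_trans inf_le_right (hFle h)) le_sup_right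
      · exact le_trans le_sup_left le_sup_left
      · exact le_trans (hFle (by omega)) le_sup_right
    · refine (hC 0).disjoint.symm.mono_right (sSup_le ?_)
      rintro y ⟨hys, hyx⟩
      rw [mem_singleton_iff] at hyx
      obtain ⟨hy1, hyne⟩ := hmem y hys
      rcases hy1 with ⟨j, hj, rfl⟩ | rfl | rfl
      · exact le_trans inf_le_right (hFle (Nat.zero_le _))
      · exact absurd rfl hyx
      · exact hFle (Nat.zero_le _)
    · refine (hA (n + 1)).disjoint.mono_right (sSup_le ?_)
      rintro y ⟨hys, hyx⟩
      rw [mem_singleton_iff] at hyx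
      obtain ⟨hy1, hyne⟩ := hmem y hys
      rcases hy1 with ⟨j, hj, rfl⟩ | rfl | rfl
      · exact hDleA (by omega)
      · exact le_sup_left
      · exact absurd rfl hyx
  -- sup is top
  have hle : ∀ z : Submodule R M,
      (z ∈ D '' Set.Iio (n + 1) ∪ {C 0, F (n + 1)}) → z ≤ sSup s := by
    intro z hz
    by_cases h : z = ⊥
    · simp [h]
    · exact le_sSup ⟨hz, by simpa using h⟩
  have hsup : sSup s = ⊤ := by
    apply le_antisymm le_top
    rw [← (hA (n + 1)).sup_eq_top]
    refine sup_le (hle _ (Or.inr (by simp))) ?_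
    rw [hAdef]
    refine sup_le (hle _ (Or.inr (by simp))) (Finset.sup_le fun j hj => ?_)
    exact hle _ (Or.inl ⟨j, mem_Iio.2 (Finset.mem_range.1 hj), rfl⟩)
  have hbot : ⊥ ∉ s := fun h => h.2 rfl
  -- cardinality
  have hDsub : D '' Set.Iio (n + 1) ⊆ s := by
    rintro z ⟨i, hi, rfl⟩
    exact hDmem i (Nat.lt_succ_iff.1 (mem_Iio.1 hi))
  have hsfin : s.Finite :=
    (((Set.finite_Iio _).image D).union (Set.toFinite _)).subset diff_subset
  have hinj : Set.InjOn D (Set.Iio (n + 1)) := by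
    intro i hi j hj h
    rcases lt_trichotomy i j with hlt | heq | hlt
    · exact absurd h (hDne hlt (Nat.lt_succ_iff.1 (mem_Iio.1 hj)))
    · exact heq
    · exact absurd h.symm (hDne hlt (Nat.lt_succ_iff.1 (mem_Iio.1 hi)))
  have hcard : (D '' Set.Iio (n + 1)).ncard = n + 1 := by
    rw [Set.ncard_image_of_injOn hinj]
    rw [show Set.Iio (n + 1) = ↑(Finset.range (n + 1)) by ext x; simp]
    rw [Set.ncard_coe_finset, Finset.card_range]
  refine ⟨s, ⟨hind, hsup, hbot⟩, hsfin, ?_⟩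
  rw [← hcard]
  exact Set.ncard_le_ncard hDsub hsfin

end Aux

/-- A module `M` has finite Krull-Schmidt length (a finite bound on the cardinality of its
direct sum decompositions into nonzero summands) iff there exists `n ≥ 1` such that every
strictly descending chain of direct summands of `M` has length at most `n`. -/
theorem finite_KS_length_iff_bounded_descending_chains {R : Type*} [Ring R] {M : Type*}
    [AddCommGroup M] [Module R M] :
    (∃ n : ℕ, ∀ s : Set (Submodule R M), IsDecomp s → s.Finite ∧ s.ncard ≤ n) ↔
    (∃ n : ℕ, 1 ≤ n ∧ ¬ ∃ f : Fin (n + 1) → Submodule R M,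
      (∀ i, IsSummand (f i)) ∧ StrictAnti f) := by
  constructor
  · rintro ⟨n, hn⟩
    refine ⟨n + 1, by omega, ?_⟩
    rintro ⟨f, hfs, hfa⟩
    obtain ⟨s, hsd, hsf, hsc⟩ := aux_forward f hfs hfa
    have := (hn s hsd).2
    omega
  · rintro ⟨m, -, hm⟩
    exact ⟨m, fun s hs => aux_backward hm hs⟩
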